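/- Let t₁ > 0, t₂ > 0 and let N, Q be positive integers. On a probability space, let {G_{n,k} : 1 ≤ n ≤ N, 1 ≤ k ≤ Q} and {H_n : 1 ≤ n ≤ N} be mutually independent random variables, each G_{n,k} following the Gamma distribution with shape t₂ and rate t₂, and each H_n following the Gamma distribution with shape t₁ and rate t₁. Define S = ∑_{n=1}^{N} ( ∑_{k=1}^{Q} G_{n,k} ) · H_n. Then E[S] = NQ and Var[S] = NQ · (1 + t₁ + Q t₂)/(t₁ t₂). (This is Lemma 2: the effective channel gain of the m-th user has the same mean NQ and variance NQ·t_h, with t_h = (1+t₁+Qt₂)/(t₁t₂), as the Gamma distribution Γ(NQ/t_h, t_h) used as its approximation.) -/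

import Mathlib

open MeasureTheory ProbabilityTheory Real
open scoped ENNReal NNReal

namespace Stmt7Aux

lemma mul_pdf (a r : ℝ) (ha : 0 < a) (hr : 0 < r) (x : ℝ) :
    x * gammaPDFReal a r x = (a / r) * gammaPDFReal (a + 1) r x := by
  unfold gammaPDFReal
  by_cases h : 0 ≤ x
  · rw [if_pos h, if_pos h]
    rcases eq_or_lt_of_le h with h0 | h0
    · rw [← h0]
      rw [show a + 1 - 1 = a by ring, Real.zero_rpow ha.ne']
      ring
    · have h1 : x ^ (a - 1) * x = x ^ a := by
        rw [← Real.rpow_add_one h0.ne' (a - 1)]; norm_num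
      have hΓ : Real.Gamma (a + 1) = a * Real.Gamma a := Real.Gamma_add_one ha.ne'
      have hra : r ^ (a + 1) = r ^ a * r := Real.rpow_add_one hr.ne' a
      have h2 : x ^ (a + 1 - 1) = x ^ a := by norm_num
      have hΓ0 : Real.Gamma a ≠ 0 := (Real.Gamma_pos_of_pos ha).ne'
      rw [hΓ, hra, h2]
      field_simp
      rw [← h1]
      ring
  · rw [if_neg h, if_neg h]
    ring

end Stmt7Aux

namespace Stmt7Aux

lemma integrable_pdf (a r : ℝ) (ha : 0 < a) (hr : 0 < r) :
    Integrable (gammaPDFReal a r) := by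
  refine ⟨(measurable_gammaPDFReal a r).aestronglyMeasurable, ?_⟩
  rw [hasFiniteIntegral_iff_ofReal (ae_of_all _ (gammaPDFReal_nonneg ha hr))]
  have h1 : ∫⁻ x, ENNReal.ofReal (gammaPDFReal a r x) = 1 := lintegral_gammaPDF_eq_one ha hr
  rw [h1]
  exact ENNReal.one_lt_top

lemma integral_pdf (a r : ℝ) (ha : 0 < a) (hr : 0 < r) :
    ∫ x, gammaPDFReal a r x = 1 := by
  rw [integral_eq_lintegral_of_nonneg_ae (ae_of_all _ (gammaPDFReal_nonneg ha hr))
    (measurable_gammaPDFReal a r).aestronglyMeasurable]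
  have h1 : ∫⁻ x, ENNReal.ofReal (gammaPDFReal a r x) = 1 := lintegral_gammaPDF_eq_one ha hr
  rw [h1]
  simp

lemma gammaMeasure_eq (a r : ℝ) : gammaMeasure a r =
    MeasureTheory.volume.withDensity (fun x => ((gammaPDFReal a r x).toNNReal : ℝ≥0∞)) := rfl

lemma integral_gamma (g : ℝ → ℝ) (a r : ℝ) (ha : 0 < a) (hr : 0 < r) :
    ∫ x, g x ∂(gammaMeasure a r) = ∫ x, gammaPDFReal a r x * g x := by
  rw [gammaMeasure_eq,
    integral_withDensity_eq_integral_smul (measurable_gammaPDFReal a r).real_toNNReal]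
  congr 1; funext x
  rw [NNReal.smul_def, Real.coe_toNNReal _ (gammaPDFReal_nonneg ha hr x), smul_eq_mul]

lemma integrable_gamma_iff (g : ℝ → ℝ) (a r : ℝ) (ha : 0 < a) (hr : 0 < r) :
    Integrable g (gammaMeasure a r) ↔
      Integrable (fun x => g x * gammaPDFReal a r x) := by
  have h := integrable_withDensity_iff (μ := MeasureTheory.volume)
    (f := gammaPDF a r) (measurable_gammaPDFReal a r).ennreal_ofReal
    (ae_of_all _ fun x => ENNReal.ofReal_lt_top) (g := g)
  rw [show MeasureTheory.volume.withDensity (gammaPDF a r) = gammaMeasure a r from rfl] at h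
  rw [h]
  apply integrable_congr
  filter_upwards with x
  rw [gammaPDF, ENNReal.toReal_ofReal (gammaPDFReal_nonneg ha hr x)]

lemma sq_pdf (a r : ℝ) (ha : 0 < a) (hr : 0 < r) (x : ℝ) :
    gammaPDFReal a r x * x ^ 2 = (a * (a + 1) / r ^ 2) * gammaPDFReal (a + 2) r x := by
  have h1 := mul_pdf a r ha hr x
  have h2 := mul_pdf (a + 1) r (by linarith) hr x
  rw [show a + 1 + 1 = a + 2 by ring] at h2
  calc gammaPDFReal a r x * x ^ 2 = (x * gammaPDFReal a r x) * x := by ring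
    _ = ((a / r) * gammaPDFReal (a + 1) r x) * x := by rw [h1]
    _ = (a / r) * (x * gammaPDFReal (a + 1) r x) := by ring
    _ = (a / r) * ((a + 1) / r * gammaPDFReal (a + 2) r x) := by rw [h2]
    _ = (a * (a + 1) / r ^ 2) * gammaPDFReal (a + 2) r x := by ring

lemma integrable_id_gamma (a r : ℝ) (ha : 0 < a) (hr : 0 < r) :
    Integrable (fun x : ℝ => x) (gammaMeasure a r) := by
  rw [integrable_gamma_iff _ a r ha hr]
  have h : (fun x : ℝ => x * gammaPDFReal a r x)
      = fun x => (a / r) * gammaPDFReal (a + 1) r x := funext fun x => mul_pdf a r ha hr x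
  rw [h]
  exact (integrable_pdf (a + 1) r (by linarith) hr).const_mul _

lemma integral_id_gamma (a r : ℝ) (ha : 0 < a) (hr : 0 < r) :
    ∫ x, x ∂(gammaMeasure a r) = a / r := by
  rw [integral_gamma _ a r ha hr]
  have h : (fun x : ℝ => gammaPDFReal a r x * x)
      = fun x => (a / r) * gammaPDFReal (a + 1) r x := by
    funext x; rw [mul_comm]; exact mul_pdf a r ha hr x
  rw [h, integral_const_mul, integral_pdf (a + 1) r (by linarith) hr, mul_one]

lemma integrable_sq_gamma (a r : ℝ) (ha : 0 < a) (hr : 0 < r) :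
    Integrable (fun x : ℝ => x ^ 2) (gammaMeasure a r) := by
  rw [integrable_gamma_iff _ a r ha hr]
  have h : (fun x : ℝ => x ^ 2 * gammaPDFReal a r x)
      = fun x => (a * (a + 1) / r ^ 2) * gammaPDFReal (a + 2) r x := by
    funext x; rw [mul_comm]; exact sq_pdf a r ha hr x
  rw [h]
  exact (integrable_pdf (a + 2) r (by linarith) hr).const_mul _

lemma integral_sq_gamma (a r : ℝ) (ha : 0 < a) (hr : 0 < r) :
    ∫ x, x ^ 2 ∂(gammaMeasure a r) = a * (a + 1) / r ^ 2 := by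
  rw [integral_gamma _ a r ha hr]
  have h : (fun x : ℝ => gammaPDFReal a r x * x ^ 2)
      = fun x => (a * (a + 1) / r ^ 2) * gammaPDFReal (a + 2) r x :=
    funext fun x => sq_pdf a r ha hr x
  rw [h, integral_const_mul, integral_pdf (a + 2) r (by linarith) hr, mul_one]

variable {Ω : Type*} [MeasurableSpace Ω] {μ : Measure Ω}

lemma moments {X : Ω → ℝ} {a r : ℝ} (ha : 0 < a) (hr : 0 < r) (hm : Measurable X)
    (hmap : Measure.map X μ = gammaMeasure a r) :
    Integrable X μ ∧ (∫ ω, X ω ∂μ) = a / r ∧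
    Integrable (fun ω => X ω ^ 2) μ ∧ (∫ ω, X ω ^ 2 ∂μ) = a * (a + 1) / r ^ 2 ∧
    MemLp X 2 μ := by
  have hi1 : Integrable X μ := by
    have h := integrable_map_measure (μ := μ) (f := X) (g := fun x : ℝ => x)
      aestronglyMeasurable_id hm.aemeasurable
    rw [hmap] at h
    exact h.mp (integrable_id_gamma a r ha hr)
  have he1 : (∫ ω, X ω ∂μ) = a / r := by
    have h := integral_map (μ := μ) (φ := X) (f := fun x : ℝ => x) hm.aemeasurable
      aestronglyMeasurable_id
    rw [hmap, integral_id_gamma a r ha hr] at h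
    exact h.symm
  have hi2 : Integrable (fun ω => X ω ^ 2) μ := by
    have h := integrable_map_measure (μ := μ) (f := X) (g := fun x : ℝ => x ^ 2)
      (measurable_id.pow_const 2).aestronglyMeasurable hm.aemeasurable
    rw [hmap] at h
    exact h.mp (integrable_sq_gamma a r ha hr)
  have he2 : (∫ ω, X ω ^ 2 ∂μ) = a * (a + 1) / r ^ 2 := by
    have h := integral_map (μ := μ) (φ := X) (f := fun x : ℝ => x ^ 2) hm.aemeasurable
      (measurable_id.pow_const 2).aestronglyMeasurable
    rw [hmap, integral_sq_gamma a r ha hr] at h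
    exact h.symm
  exact ⟨hi1, he1, hi2, he2,
    (memLp_two_iff_integrable_sq hm.aestronglyMeasurable).mpr hi2⟩

end Stmt7Aux

namespace Stmt7Aux

lemma sum_ite_const {M : ℕ} (k : Fin M) (A B : ℝ) :
    ∑ l : Fin M, (if l = k then A else B) = M * B + (A - B) := by
  have h : ∀ l : Fin M, (if l = k then A else B) = B + (if l = k then A - B else 0) :=
    fun l => by split <;> ring
  simp_rw [h]
  rw [Finset.sum_add_distrib, Finset.sum_const, Finset.sum_ite_eq' Finset.univ k fun _ => A - B]
  simp [mul_comm]

end Stmt7Aux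

theorem stmt_7 (t₁ t₂ : ℝ) (ht₁ : 0 < t₁) (ht₂ : 0 < t₂) (N Q : ℕ) (hN : 0 < N) (hQ : 0 < Q)
    {Ω : Type*} [MeasurableSpace Ω] (μ : Measure Ω) [IsProbabilityMeasure μ]
    (G : Fin N → Fin Q → Ω → ℝ) (H : Fin N → Ω → ℝ)
    (hGmeas : ∀ n k, Measurable (G n k)) (hHmeas : ∀ n, Measurable (H n))
    (hindep : iIndepFun
      (Sum.elim (fun p : Fin N × Fin Q => G p.1 p.2) H) μ)
    (hG : ∀ n k, Measure.map (G n k) μ = gammaMeasure t₂ t₂)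
    (hH : ∀ n, Measure.map (H n) μ = gammaMeasure t₁ t₁) :
    (∫ ω, (∑ n : Fin N, (∑ k : Fin Q, G n k ω) * H n ω) ∂μ) = N * Q ∧
    variance (fun ω => ∑ n : Fin N, (∑ k : Fin Q, G n k ω) * H n ω) μ =
      N * Q * (1 + t₁ + Q * t₂) / (t₁ * t₂) := by
  set ι := (Fin N × Fin Q) ⊕ Fin N with hι
  set F := Sum.elim (fun p : Fin N × Fin Q => G p.1 p.2) H with hF
  have hFmeas : ∀ i, Measurable (F i) := by
    rintro (⟨n, k⟩ | n)
    · exact hGmeas n k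
    · exact hHmeas n
  -- moments of individual variables
  have MG := fun n k => Stmt7Aux.moments ht₂ ht₂ (hGmeas n k) (hG n k)
  have MH := fun n => Stmt7Aux.moments ht₁ ht₁ (hHmeas n) (hH n)
  have intG : ∀ n k, Integrable (G n k) μ := fun n k => (MG n k).1
  have intH : ∀ n, Integrable (H n) μ := fun n => (MH n).1
  have eEG : ∀ n k, (∫ ω, G n k ω ∂μ) = 1 := by
    intro n k; rw [(MG n k).2.1, div_self ht₂.ne']
  have eEH : ∀ n, (∫ ω, H n ω ∂μ) = 1 := by
    intro n; rw [(MH n).2.1, div_self ht₁.ne']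
  have eEG2 : ∀ n k, (∫ ω, G n k ω ^ 2 ∂μ) = (t₂ + 1) / t₂ := by
    intro n k; rw [(MG n k).2.2.2.1]; field_simp
  have eEH2 : ∀ n, (∫ ω, H n ω ^ 2 ∂μ) = (t₁ + 1) / t₁ := by
    intro n; rw [(MH n).2.2.2.1]; field_simp
  have intH2 : ∀ n, Integrable (fun ω => H n ω ^ 2) μ := fun n => (MH n).2.2.1
  have hmulint : ∀ {X Y : Ω → ℝ}, IndepFun X Y μ → Integrable X μ → Integrable Y μ →
      (∫ ω, X ω * Y ω ∂μ) = (∫ ω, X ω ∂μ) * ∫ ω, Y ω ∂μ := by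
    intro X Y h hX hY
    have h2 := h.integral_mul_eq_mul_integral hX.aestronglyMeasurable hY.aestronglyMeasurable
    simpa [Pi.mul_apply] using h2
  -- pairwise independence of the G's
  have hGG : ∀ n k k', k ≠ k' → IndepFun (G n k) (G n k') μ := by
    intro n k k' h
    exact hindep.indepFun (i := Sum.inl (n, k)) (j := Sum.inl (n, k')) (by simp [h])
  -- independence of (∑ k, G n k) and H n
  have hXH : ∀ n, IndepFun (fun ω => ∑ k : Fin Q, G n k ω) (H n) μ := by
    intro n
    set S₁ : Finset ι := Finset.univ.image fun k : Fin Q => Sum.inl (n, k) with hS₁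
    have hmem : ∀ k : Fin Q, (Sum.inl (n, k) : ι) ∈ S₁ :=
      fun k => Finset.mem_image_of_mem _ (Finset.mem_univ k)
    have hd : Disjoint S₁ ({Sum.inr n} : Finset ι) := by
      rw [Finset.disjoint_left]
      rintro i hi hj
      simp only [hS₁, Finset.mem_image, Finset.mem_univ, true_and] at hi
      obtain ⟨k, rfl⟩ := hi
      simp at hj
    have h := hindep.indepFun_finset S₁ {Sum.inr n} hd hFmeas
    exact h.comp (φ := fun v : (∀ _ : ↥S₁, ℝ) => ∑ k : Fin Q, v ⟨Sum.inl (n, k), hmem k⟩)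
      (ψ := fun v : (∀ _ : ↥({Sum.inr n} : Finset ι), ℝ) =>
        v ⟨Sum.inr n, Finset.mem_singleton_self _⟩)
      (Finset.measurable_sum Finset.univ fun k _ => measurable_pi_apply _)
      (measurable_pi_apply _)
  -- independence of the blocks
  set Sb : Fin N → Finset ι := fun n => insert (Sum.inr n)
    (Finset.univ.image fun k : Fin Q => Sum.inl (n, k)) with hSb
  have hmem1 : ∀ n k, (Sum.inl (n, k) : ι) ∈ Sb n := by
    intro n k
    exact Finset.mem_insert_of_mem (Finset.mem_image_of_mem _ (Finset.mem_univ k))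
  have hmem2 : ∀ n, (Sum.inr n : ι) ∈ Sb n := fun n => Finset.mem_insert_self _ _
  have hYY : ∀ n m, n ≠ m → IndepFun (fun ω => (∑ k : Fin Q, G n k ω) * H n ω)
      (fun ω => (∑ k : Fin Q, G m k ω) * H m ω) μ := by
    intro n m hnm
    have hd : Disjoint (Sb n) (Sb m) := by
      rw [Finset.disjoint_left]
      rintro i hi hj
      simp only [hSb, Finset.mem_insert, Finset.mem_image, Finset.mem_univ, true_and] at hi hj
      rcases hi with rfl | ⟨k, rfl⟩ <;> rcases hj with h | ⟨k', h⟩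
      · injection h with h'; exact hnm h'
      · cases h
      · cases h
      · injection h with h'
        exact hnm (congrArg Prod.fst h').symm
    have h := hindep.indepFun_finset (Sb n) (Sb m) hd hFmeas
    exact h.comp
      (φ := fun v : (∀ _ : ↥(Sb n), ℝ) =>
        (∑ k : Fin Q, v ⟨Sum.inl (n, k), hmem1 n k⟩) * v ⟨Sum.inr n, hmem2 n⟩)
      (ψ := fun v : (∀ _ : ↥(Sb m), ℝ) =>
        (∑ k : Fin Q, v ⟨Sum.inl (m, k), hmem1 m k⟩) * v ⟨Sum.inr m, hmem2 m⟩)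
      ((Finset.measurable_sum Finset.univ fun k _ =>
          measurable_pi_apply (⟨Sum.inl (n, k), hmem1 n k⟩ : { x // x ∈ Sb n })).mul
        (measurable_pi_apply (⟨Sum.inr n, hmem2 n⟩ : { x // x ∈ Sb n })))
      ((Finset.measurable_sum Finset.univ fun k _ =>
          measurable_pi_apply (⟨Sum.inl (m, k), hmem1 m k⟩ : { x // x ∈ Sb m })).mul
        (measurable_pi_apply (⟨Sum.inr m, hmem2 m⟩ : { x // x ∈ Sb m })))
  -- X-level facts
  have intX : ∀ n, Integrable (fun ω => ∑ k : Fin Q, G n k ω) μ :=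
    fun n => integrable_finset_sum _ fun k _ => intG n k
  have EX : ∀ n, (∫ ω, ∑ k : Fin Q, G n k ω ∂μ) = (Q : ℝ) := by
    intro n
    rw [integral_finset_sum _ fun k _ => intG n k]
    rw [Finset.sum_congr rfl fun k _ => eEG n k]
    simp
  have memX : ∀ n, MemLp (fun ω => ∑ k : Fin Q, G n k ω) 2 μ :=
    fun n => memLp_finset_sum _ fun k _ => (MG n k).2.2.2.2
  have intX2 : ∀ n, Integrable (fun ω => (∑ k : Fin Q, G n k ω) ^ 2) μ :=
    fun n => (memX n).integrable_sq
  have EX2 : ∀ n, (∫ ω, (∑ k : Fin Q, G n k ω) ^ 2 ∂μ)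
      = Q * ((Q : ℝ) * 1 + ((t₂ + 1) / t₂ - 1)) := by
    intro n
    have hsq : (fun ω => (∑ k : Fin Q, G n k ω) ^ 2)
        = fun ω => ∑ k : Fin Q, ∑ l : Fin Q, G n k ω * G n l ω := by
      funext ω; rw [sq, Finset.sum_mul_sum]
    have hint : ∀ k l : Fin Q, Integrable (fun ω => G n k ω * G n l ω) μ := by
      intro k l
      rcases eq_or_ne k l with rfl | h
      · simpa [sq] using (MG n k).2.2.1
      · exact (hGG n k l h).integrable_mul (intG n k) (intG n l)
    rw [hsq, integral_finset_sum _ fun k _ => integrable_finset_sum _ fun l _ => hint k l]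
    have hterm : ∀ k : Fin Q, (∫ ω, ∑ l : Fin Q, G n k ω * G n l ω ∂μ)
        = (Q : ℝ) * 1 + ((t₂ + 1) / t₂ - 1) := by
      intro k
      rw [integral_finset_sum _ fun l _ => hint k l]
      rw [Finset.sum_congr rfl fun l _ => show (∫ ω, G n k ω * G n l ω ∂μ)
          = if l = k then (t₂ + 1) / t₂ else 1 from ?_, Stmt7Aux.sum_ite_const]
      rcases eq_or_ne l k with rfl | h
      · rw [if_pos rfl, ← eEG2 n l]
        congr 1; funext ω; rw [sq]
      · rw [if_neg h,
          hmulint (hGG n k l (Ne.symm h)) (intG n k) (intG n l),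
          eEG n k, eEG n l, mul_one]
    rw [Finset.sum_congr rfl fun k _ => hterm k, Finset.sum_const]
    simp only [Finset.card_univ, Fintype.card_fin, nsmul_eq_mul]
    try ring
  -- Y-level facts
  have intY : ∀ n, Integrable (fun ω => (∑ k : Fin Q, G n k ω) * H n ω) μ := by
    intro n
    exact (hXH n).integrable_mul (intX n) (intH n)
  have EY : ∀ n, (∫ ω, (∑ k : Fin Q, G n k ω) * H n ω ∂μ) = (Q : ℝ) := by
    intro n
    rw [hmulint (hXH n) (intX n) (intH n), EX n, eEH n, mul_one]
  have hXsqHsq : ∀ n, IndepFun (fun ω => (∑ k : Fin Q, G n k ω) ^ 2)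
      (fun ω => H n ω ^ 2) μ :=
    fun n => (hXH n).comp (measurable_id.pow_const 2) (measurable_id.pow_const 2)
  have intY2 : ∀ n, Integrable (fun ω => ((∑ k : Fin Q, G n k ω) * H n ω) ^ 2) μ := by
    intro n
    have h := (hXsqHsq n).integrable_mul (intX2 n) (intH2 n)
    exact h.congr (ae_of_all _ fun ω => by simp [Pi.mul_apply, mul_pow])
  have EY2 : ∀ n, (∫ ω, ((∑ k : Fin Q, G n k ω) * H n ω) ^ 2 ∂μ)
      = (Q * ((Q : ℝ) * 1 + ((t₂ + 1) / t₂ - 1))) * ((t₁ + 1) / t₁) := by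
    intro n
    have h1 : (∫ ω, ((∑ k : Fin Q, G n k ω) * H n ω) ^ 2 ∂μ)
        = ∫ ω, ((∑ k : Fin Q, G n k ω) ^ 2) * (H n ω ^ 2) ∂μ := by
      congr 1; funext ω; ring
    rw [h1, hmulint (hXsqHsq n) (intX2 n) (intH2 n), EX2 n, eEH2 n]
  have memY : ∀ n, MemLp (fun ω => (∑ k : Fin Q, G n k ω) * H n ω) 2 μ := by
    intro n
    have hm : Measurable (fun ω => (∑ k : Fin Q, G n k ω) * H n ω) :=
      (Finset.measurable_sum Finset.univ fun k _ => hGmeas n k).mul (hHmeas n)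
    exact (memLp_two_iff_integrable_sq hm.aestronglyMeasurable).mpr (intY2 n)
  -- expectation of S
  have ES : (∫ ω, (∑ n : Fin N, (∑ k : Fin Q, G n k ω) * H n ω) ∂μ) = (N : ℝ) * Q := by
    rw [integral_finset_sum _ fun n _ => intY n, Finset.sum_congr rfl fun n _ => EY n,
      Finset.sum_const]
    simp [mul_comm]
  refine ⟨ES, ?_⟩
  -- variance of S
  have memS : MemLp (fun ω => ∑ n : Fin N, (∑ k : Fin Q, G n k ω) * H n ω) 2 μ :=
    memLp_finset_sum _ fun n _ => memY n
  rw [variance_eq_sub memS]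
  have intYY : ∀ n m : Fin N,
      Integrable (fun ω => ((∑ k : Fin Q, G n k ω) * H n ω) *
        ((∑ k : Fin Q, G m k ω) * H m ω)) μ := by
    intro n m
    rcases eq_or_ne n m with rfl | h
    · exact (intY2 n).congr (ae_of_all _ fun ω => by simp [sq])
    · exact ((hYY n m h).integrable_mul (intY n) (intY m)).congr
        (ae_of_all _ fun ω => rfl)
  have hS2 : (fun ω => ∑ n : Fin N, (∑ k : Fin Q, G n k ω) * H n ω) ^ 2
      = fun ω => ∑ n : Fin N, ∑ m : Fin N, ((∑ k : Fin Q, G n k ω) * H n ω) *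
        ((∑ k : Fin Q, G m k ω) * H m ω) := by
    funext ω
    rw [Pi.pow_apply, sq, Finset.sum_mul_sum]
  have hterm2 : ∀ n : Fin N, (∫ ω, ∑ m : Fin N, ((∑ k : Fin Q, G n k ω) * H n ω) *
      ((∑ k : Fin Q, G m k ω) * H m ω) ∂μ)
      = (N : ℝ) * ((Q : ℝ) * (Q : ℝ))
        + ((Q * ((Q : ℝ) * 1 + ((t₂ + 1) / t₂ - 1))) * ((t₁ + 1) / t₁) - (Q : ℝ) * (Q : ℝ)) := by
    intro n
    rw [integral_finset_sum _ fun m _ => intYY n m]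
    rw [Finset.sum_congr rfl fun m _ => show (∫ ω, ((∑ k : Fin Q, G n k ω) * H n ω) *
        ((∑ k : Fin Q, G m k ω) * H m ω) ∂μ)
        = if m = n then (Q * ((Q : ℝ) * 1 + ((t₂ + 1) / t₂ - 1))) * ((t₁ + 1) / t₁)
          else (Q : ℝ) * (Q : ℝ) from ?_, Stmt7Aux.sum_ite_const]
    rcases eq_or_ne m n with rfl | h
    · rw [if_pos rfl, ← EY2 m]
      congr 1; funext ω; rw [sq]
    · rw [if_neg h,
        hmulint (hYY n m (Ne.symm h)) (intY n) (intY m), EY n, EY m]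
  have hES2 : (∫ ω, ((fun ω => ∑ n : Fin N, (∑ k : Fin Q, G n k ω) * H n ω) ^ 2) ω ∂μ)
      = (N : ℝ) * ((N : ℝ) * ((Q : ℝ) * (Q : ℝ))
        + ((Q * ((Q : ℝ) * 1 + ((t₂ + 1) / t₂ - 1))) * ((t₁ + 1) / t₁)
          - (Q : ℝ) * (Q : ℝ))) := by
    rw [hS2, integral_finset_sum _ fun n _ => integrable_finset_sum _ fun m _ => intYY n m,
      Finset.sum_congr rfl fun n _ => hterm2 n, Finset.sum_const]
    simp only [Finset.card_univ, Fintype.card_fin, nsmul_eq_mul]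
    try ring
  rw [show (μ[(fun ω => ∑ n : Fin N, (∑ k : Fin Q, G n k ω) * H n ω) ^ 2]) =
    (N : ℝ) * ((N : ℝ) * ((Q : ℝ) * (Q : ℝ))
        + ((Q * ((Q : ℝ) * 1 + ((t₂ + 1) / t₂ - 1))) * ((t₁ + 1) / t₁)
          - (Q : ℝ) * (Q : ℝ))) from hES2, show (μ[fun ω => ∑ n : Fin N,
    (∑ k : Fin Q, G n k ω) * H n ω]) = (N : ℝ) * Q from ES]
  field_simp
  ring
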